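/- For every real t with |t| < 1 and every integer k ≥ 1, the matrix [(I - tB)^{-1} A]^k equals the block matrix whose (U,U) block is V^k, whose (U^c,U) block is W·V^{k-1}, and whose (U,U^c) and (U^c,U^c) blocks are zero, where V = P_{UU} + t P_{UU^c} (I - t P_{U^cU^c})^{-1} P_{U^cU} and W = (I - t P_{U^cU^c})^{-1} P_{U^cU}. -/
import Mathlib

open Matrix Finset
open scoped NNReal

section Aux

attribute [local instance] Matrix.linftyOpNormedRing Matrix.linftyOpNormedAlgebra

lemma aux_isUnit_one_sub_smul {n : Type*} [Fintype n] [DecidableEq n]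
    (M : Matrix n n ℝ) (hM : ∀ i, ∑ j, |M i j| ≤ 1)
    (t : ℝ) (ht : |t| < 1) : IsUnit (1 - t • M) := by
  have hMn : ‖M‖ ≤ 1 := by
    rw [Matrix.linfty_opNorm_def]
    have h : ∀ i, (∑ j, ‖M i j‖₊ : ℝ≥0) ≤ 1 := by
      intro i
      rw [← NNReal.coe_le_coe]
      push_cast
      simpa [Real.norm_eq_abs] using hM i
    calc ((Finset.univ.sup fun i => ∑ j, ‖M i j‖₊ : ℝ≥0) : ℝ) ≤ ((1 : ℝ≥0) : ℝ) := by
          exact_mod_cast Finset.sup_le fun i _ => h i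
      _ = 1 := by norm_num
  have hlt : ‖t • M‖ < 1 := by
    rw [norm_smul, Real.norm_eq_abs]
    calc |t| * ‖M‖ ≤ |t| * 1 := by nlinarith [norm_nonneg M, abs_nonneg t]
      _ < 1 := by simpa using ht
  exact isUnit_one_sub_of_norm_lt_one hlt

end Aux

lemma aux_blockpow {m n R : Type*} [Fintype m] [Fintype n] [DecidableEq m] [DecidableEq n]
    [CommRing R] (V : Matrix m m R) (W : Matrix n m R) (k : ℕ) (hk : 1 ≤ k) :
    (fromBlocks V (0 : Matrix m n R) W (0 : Matrix n n R)) ^ k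
      = fromBlocks (V ^ k) 0 (W * V ^ (k - 1)) 0 := by
  induction k, hk using Nat.le_induction with
  | base => simp [pow_one]
  | succ k hk ih =>
    have hk' : k - 1 + 1 = k := Nat.succ_pred_eq_of_pos hk
    have h2 : W * V ^ (k - 1) * V = W * V ^ (k + 1 - 1) := by
      rw [Nat.add_sub_cancel, Matrix.mul_assoc, ← pow_succ, hk']
    rw [pow_succ, ih, fromBlocks_multiply]
    simp only [Matrix.zero_mul, Matrix.mul_zero, add_zero, zero_add]
    rw [← pow_succ, h2]

theorem stmt6 {S : Type*} [Fintype S] [DecidableEq S] [Nonempty S]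
    (P : Matrix S S ℝ) (hP0 : ∀ i j, 0 ≤ P i j) (hP1 : ∀ i, ∑ j, P i j = 1)
    (U : Finset S) (A B : Matrix S S ℝ)
    (hA : ∀ i j, A i j = if j ∈ U then P i j else 0)
    (hB : ∀ i j, B i j = if j ∉ U then P i j else 0)
    (Puu : Matrix {x // x ∈ U} {x // x ∈ U} ℝ)
    (hPuu : ∀ i j, Puu i j = P i.val j.val)
    (Puc : Matrix {x // x ∈ U} {x // x ∈ Uᶜ} ℝ)
    (hPuc : ∀ i j, Puc i j = P i.val j.val)
    (Pcu : Matrix {x // x ∈ Uᶜ} {x // x ∈ U} ℝ)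
    (hPcu : ∀ i j, Pcu i j = P i.val j.val)
    (Pcc : Matrix {x // x ∈ Uᶜ} {x // x ∈ Uᶜ} ℝ)
    (hPcc : ∀ i j, Pcc i j = P i.val j.val)
    (t : ℝ) (ht : |t| < 1)
    (V : Matrix {x // x ∈ U} {x // x ∈ U} ℝ)
    (hV : V = Puu + t • (Puc * (1 - t • Pcc)⁻¹ * Pcu))
    (W : Matrix {x // x ∈ Uᶜ} {x // x ∈ U} ℝ)
    (hW : W = (1 - t • Pcc)⁻¹ * Pcu)
    (k : ℕ) (hk : 1 ≤ k) :
    (∀ i j : {x // x ∈ U},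
        (((1 - t • B)⁻¹ * A) ^ k) i.val j.val = (V ^ k) i j) ∧
    (∀ (i : {x // x ∈ Uᶜ}) (j : {x // x ∈ U}),
        (((1 - t • B)⁻¹ * A) ^ k) i.val j.val = (W * V ^ (k - 1)) i j) ∧
    (∀ (i : {x // x ∈ U}) (j : {x // x ∈ Uᶜ}),
        (((1 - t • B)⁻¹ * A) ^ k) i.val j.val = 0) ∧
    (∀ (i : {x // x ∈ Uᶜ}) (j : {x // x ∈ Uᶜ}),
        (((1 - t • B)⁻¹ * A) ^ k) i.val j.val = 0) := by
  classical
  -- invertibility of 1 - t•B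
  have hUnitB : IsUnit (1 - t • B) := by
    refine aux_isUnit_one_sub_smul B (fun i => ?_) t ht
    calc ∑ j, |B i j| ≤ ∑ j, P i j := by
          refine Finset.sum_le_sum fun j _ => ?_
          rw [hB]
          split
          · rw [abs_of_nonneg (hP0 i j)]
          · simpa using hP0 i j
      _ = 1 := hP1 i
  -- invertibility of 1 - t•Pcc
  have hUnitC : IsUnit (1 - t • Pcc) := by
    refine aux_isUnit_one_sub_smul Pcc (fun i => ?_) t ht
    calc ∑ j : {x // x ∈ Uᶜ}, |Pcc i j|
        = ∑ j ∈ Uᶜ, P i.val j := by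
          rw [← Finset.sum_coe_sort (Uᶜ) (fun j => P i.val j)]
          exact Finset.sum_congr rfl fun j _ => by rw [hPcc, abs_of_nonneg (hP0 _ _)]
      _ ≤ ∑ j, P i.val j := by
          refine Finset.sum_le_sum_of_subset_of_nonneg (Finset.subset_univ _) ?_
          exact fun j _ _ => hP0 _ _
      _ = 1 := hP1 i.val
  have hdetB : IsUnit (1 - t • B).det := (Matrix.isUnit_iff_isUnit_det _).mp hUnitB
  haveI : Invertible (1 - t • B) := (1 - t • B).invertibleOfIsUnitDet hdetB
  have hdetC : IsUnit (1 - t • Pcc).det := (Matrix.isUnit_iff_isUnit_det _).mp hUnitC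
  -- the reindexing equivalence
  let e : {x // x ∈ U} ⊕ {x // x ∈ Uᶜ} ≃ S :=
    (Equiv.sumCongr (Equiv.refl _) (Equiv.subtypeEquivRight fun x => Finset.mem_compl)).trans
      (Equiv.sumCompl (· ∈ U))
  have he1 : ∀ i : {x // x ∈ U}, e (Sum.inl i) = i.val := fun i => by
    simp [e]
  have he2 : ∀ j : {x // x ∈ Uᶜ}, e (Sum.inr j) = j.val := fun j => by
    simp [e]
  let φ := Matrix.reindexAlgEquiv ℝ ℝ e.symm
  have hφ : ∀ (M : Matrix S S ℝ) p q, φ M p q = M (e p) (e q) := by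
    intro M p q
    simp [φ, Matrix.reindex_apply, Matrix.submatrix_apply]
  let N : Matrix S S ℝ := φ.symm (fromBlocks V 0 W 0)
  have hφN : φ N = fromBlocks V 0 W 0 := φ.apply_symm_apply _
  -- block forms
  have hne : ∀ (i : {x // x ∈ U}) (j : {x // x ∈ Uᶜ}), i.val ≠ j.val := by
    intro i j h
    exact (Finset.mem_compl.mp j.2) (h ▸ i.2)
  have hφB : φ (1 - t • B)
      = fromBlocks (1 : Matrix {x // x ∈ U} {x // x ∈ U} ℝ) (-(t • Puc)) 0 (1 - t • Pcc) := by
    ext p q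
    rcases p with i | i <;> rcases q with j | j
    · simp only [hφ, he1, Matrix.fromBlocks_apply₁₁, Matrix.sub_apply, Matrix.smul_apply,
        Matrix.one_apply, hB, smul_eq_mul]
      simp [Subtype.val_inj, j.2]
    · simp only [hφ, he1, he2, Matrix.fromBlocks_apply₁₂, Matrix.sub_apply, Matrix.smul_apply,
        Matrix.one_apply, hB, hPuc, smul_eq_mul, Matrix.neg_apply]
      simp [hne i j, Finset.mem_compl.mp j.2]
    · simp only [hφ, he1, he2, Matrix.fromBlocks_apply₂₁, Matrix.sub_apply, Matrix.smul_apply,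
        Matrix.one_apply, hB, smul_eq_mul, Matrix.zero_apply]
      simp [(hne j i).symm, j.2]
    · simp only [hφ, he2, Matrix.fromBlocks_apply₂₂, Matrix.sub_apply, Matrix.smul_apply,
        Matrix.one_apply, hB, hPcc, smul_eq_mul]
      simp [Subtype.val_inj, Finset.mem_compl.mp j.2]
  have hφA : φ A = fromBlocks Puu 0 Pcu 0 := by
    ext p q
    rcases p with i | i <;> rcases q with j | j
    · simp [hφ, he1, hA, hPuu, j.2]
    · simp [hφ, he1, he2, hA, Finset.mem_compl.mp j.2]
    · simp [hφ, he1, he2, hA, hPcu, j.2]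
    · simp [hφ, he2, hA, Finset.mem_compl.mp j.2]
  -- the key identity
  have h1 : (1 - t • B) * N = A := by
    apply φ.injective
    rw [_root_.map_mul φ (1 - t • B) N, hφB, hφN, hφA, fromBlocks_multiply]
    rw [Matrix.fromBlocks_inj]
    refine ⟨?_, by simp, ?_, by simp⟩
    · rw [Matrix.one_mul, hV, hW, Matrix.neg_mul, Matrix.smul_mul, ← Matrix.mul_assoc]
      abel
    · rw [Matrix.zero_mul, zero_add, hW, Matrix.mul_nonsing_inv_cancel_left _ _ hdetC]
  have h2 : (1 - t • B)⁻¹ * A = N := by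
    rw [← h1, Matrix.inv_mul_cancel_left_of_invertible]
  have hfin : ∀ p q, (N ^ k) (e p) (e q)
      = (fromBlocks (V ^ k) 0 (W * V ^ (k - 1)) 0) p q := by
    intro p q
    rw [show (N ^ k) (e p) (e q) = φ (N ^ k) p q from (hφ _ p q).symm, map_pow, hφN,
      aux_blockpow V W k hk]
  refine ⟨fun i j => ?_, fun i j => ?_, fun i j => ?_, fun i j => ?_⟩ <;> rw [h2]
  · have := hfin (Sum.inl i) (Sum.inl j); rwa [he1, he1, Matrix.fromBlocks_apply₁₁] at this
  · have := hfin (Sum.inr i) (Sum.inl j); rwa [he2, he1, Matrix.fromBlocks_apply₂₁] at this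
  · have := hfin (Sum.inl i) (Sum.inr j)
    rw [he1, he2, Matrix.fromBlocks_apply₁₂] at this; simpa using this
  · have := hfin (Sum.inr i) (Sum.inr j)
    rw [he2, he2, Matrix.fromBlocks_apply₂₂] at this; simpa using this
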